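/- Let E ⊆ [0,∞) be strongly porous on the right at 0 with 0 an accumulation point of E. Then the following are equivalent: (i) E is completely strongly porous; (ii) the preordered set (Ĩ_E^d, ⪯) contains a universal element L̃ = {(lₙ,mₙ)} ∈ Ĩ_E^{sd} with limsup_{n→∞} lₙ/mₙ₊₁ < ∞; (iii) E is uniformly strongly porous. -/

import Mathlib

open Filter Set Topology ENNReal

/-- λ(E,0,h): the supremum of lengths of open subintervals of (0,h) disjoint from E. -/
noncomputable def lambda0 (E : Set ℝ) (h : ℝ) : ℝ :=
  sSup {l : ℝ | ∃ a b : ℝ, 0 ≤ a ∧ a ≤ b ∧ b ≤ h ∧ Set.Ioo a b ∩ E = ∅ ∧ l = b - a}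

/-- p⁺(E,0): the right porosity of E at 0. -/
noncomputable def porosity (E : Set ℝ) : ℝ :=
  Filter.limsup (fun h => lambda0 E h / h) (nhdsWithin 0 (Set.Ioi 0))

/-- 0 is an accumulation point of E (E ⊆ [0,∞), relative topology of [0,∞)). -/
def AccZero (E : Set ℝ) : Prop := ∀ ε > 0, ∃ x ∈ E, 0 < x ∧ x < ε

/-- (a,b) is a connected component of the exterior of E in [0,∞):
an open interval in [0,∞) disjoint from E, maximal with this property. -/
def IsCompExt (E : Set ℝ) (a b : ℝ) : Prop :=
  0 ≤ a ∧ a < b ∧ Set.Ioo a b ∩ E = ∅ ∧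
  ∀ c d : ℝ, 0 ≤ c → Set.Ioo a b ⊆ Set.Ioo c d → (c, d) ≠ (a, b) → Set.Ioo c d ∩ E ≠ ∅

/-- Membership in Ĩ_E. -/
def memIE (E : Set ℝ) (A : ℕ → ℝ × ℝ) : Prop :=
  (∀ n, 0 < (A n).1) ∧ (∀ n, IsCompExt E (A n).1 (A n).2) ∧
  Filter.Tendsto (fun n => (A n).1) Filter.atTop (nhds 0) ∧
  Filter.Tendsto (fun n => ((A n).2 - (A n).1) / (A n).2) Filter.atTop (nhds 1)

/-- Almost decreasing sequence: eventually nonincreasing. -/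
def AlmostDecr (τ : ℕ → ℝ) : Prop := ∀ᶠ n in Filter.atTop, τ (n + 1) ≤ τ n

/-- Membership in Ẽ₀^d: almost decreasing sequences in E∖{0} tending to 0. -/
def memE0d (E : Set ℝ) (τ : ℕ → ℝ) : Prop :=
  AlmostDecr τ ∧ Filter.Tendsto τ Filter.atTop (nhds 0) ∧ ∀ n, τ n ∈ E \ {0}

/-- Weak equivalence ≍ of sequences: c₁ aₙ ≤ γₙ ≤ c₂ aₙ for large n. -/
def SeqEquiv (a γ : ℕ → ℝ) : Prop :=
  ∃ c₁ c₂ : ℝ, 0 < c₁ ∧ 0 < c₂ ∧ ∀ᶠ n in Filter.atTop, c₁ * a n ≤ γ n ∧ γ n ≤ c₂ * a n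

/-- E is τ̃-strongly porous. -/
def StronglyPorousWrt (E : Set ℝ) (τ : ℕ → ℝ) : Prop :=
  ∃ A : ℕ → ℝ × ℝ, memIE E A ∧ SeqEquiv (fun n => (A n).1) τ

/-- E is completely strongly porous at 0. -/
def CSP (E : Set ℝ) : Prop := ∀ τ : ℕ → ℝ, memE0d E τ → StronglyPorousWrt E τ

/-- Membership in Ĩ_E^d: first coordinates almost decreasing. -/
def memIEd (E : Set ℝ) (A : ℕ → ℝ × ℝ) : Prop := memIE E A ∧ AlmostDecr (fun n => (A n).1)

/-- Membership in Ĩ_E^{sd}: first coordinates eventually strictly decreasing. -/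
def memIEsd (E : Set ℝ) (A : ℕ → ℝ × ℝ) : Prop :=
  memIE E A ∧ ∀ᶠ n in Filter.atTop, (A (n + 1)).1 < (A n).1

/-- The preorder Ã ⪯ L̃. -/
def Prec (A L : ℕ → ℝ × ℝ) : Prop :=
  ∃ N₁ : ℕ, ∃ f : ℕ → ℕ, ∀ n ≥ N₁, (A n).1 = (L (f n)).1

/-- L̃ is universal: every Ã ∈ Ĩ_E^d satisfies Ã ⪯ L̃. -/
def Universal (E : Set ℝ) (L : ℕ → ℝ × ℝ) : Prop :=
  ∀ A : ℕ → ℝ × ℝ, memIEd E A → Prec A L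

/-- M(L̃) = limsup lₙ/mₙ₊₁ (in [0,∞]). -/
noncomputable def Mq (L : ℕ → ℝ × ℝ) : ℝ≥0∞ :=
  Filter.limsup (fun n => ENNReal.ofReal ((L n).1 / (L (n + 1)).2)) Filter.atTop

/-- C(τ̃) = inf over {(aₙ,bₙ)} ∈ Ĩ_E with τₙ ≤ aₙ eventually of limsup aₙ/τₙ. -/
noncomputable def Cseq (E : Set ℝ) (τ : ℕ → ℝ) : ℝ≥0∞ :=
  ⨅ (A : ℕ → ℝ × ℝ) (_ : memIE E A ∧ ∀ᶠ n in Filter.atTop, τ n ≤ (A n).1),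
    Filter.limsup (fun n => ENNReal.ofReal ((A n).1 / τ n)) Filter.atTop

/-- C_E = sup over τ̃ ∈ Ẽ₀^d of C(τ̃). -/
noncomputable def CE (E : Set ℝ) : ℝ≥0∞ := ⨆ (τ : ℕ → ℝ) (_ : memE0d E τ), Cseq E τ

/-- E is uniformly strongly porous at 0. -/
def USP (E : Set ℝ) : Prop :=
  ∃ c : ℝ, 0 < c ∧ ∀ τ : ℕ → ℝ, memE0d E τ → ∃ A : ℕ → ℝ × ℝ, memIE E A ∧
    (∀ᶠ n in Filter.atTop, τ n ≤ (A n).1) ∧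
    Filter.limsup (fun n => ENNReal.ofReal ((A n).1 / τ n)) Filter.atTop ≤ ENNReal.ofReal c

section CSPProofs
variable {E : Set ℝ}

lemma pair_ne_fst {c d a b : ℝ} (h : c ≠ a) : (c, d) ≠ (a, b) := by
  intro hh; rw [Prod.mk.injEq] at hh; exact h hh.1

lemma pair_ne_snd {c d a b : ℝ} (h : d ≠ b) : (c, d) ≠ (a, b) := by
  intro hh; rw [Prod.mk.injEq] at hh; exact h hh.2

lemma gap_notmem {a b x : ℝ} (h : Set.Ioo a b ∩ E = ∅) (hx : x ∈ E) (h1 : a < x) : b ≤ x := by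
  by_contra hbx
  push_neg at hbx
  exact Set.eq_empty_iff_forall_notMem.mp h x ⟨⟨h1, hbx⟩, hx⟩

lemma gap_notmem' {a b x : ℝ} (h : Set.Ioo a b ∩ E = ∅) (hx : x ∈ E) (h1 : x < b) : x ≤ a := by
  by_contra hax
  push_neg at hax
  exact Set.eq_empty_iff_forall_notMem.mp h x ⟨⟨hax, h1⟩, hx⟩

lemma comp_lt {a b a' b' : ℝ} (h : IsCompExt E a b) (h' : IsCompExt E a' b') (hlt : a < a') :
    b ≤ a' := by
  obtain ⟨ha0, hab, hgap, hmax⟩ := h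
  obtain ⟨ha0', hab', hgap', hmax'⟩ := h'
  by_contra hba
  push_neg at hba  -- a' < b
  have hempty : Set.Ioo a (max b b') ∩ E = ∅ := by
    apply Set.eq_empty_iff_forall_notMem.mpr
    rintro x ⟨⟨hax, hxd⟩, hxE⟩
    rcases lt_or_ge x b with hxb | hbx
    · exact Set.eq_empty_iff_forall_notMem.mp hgap x ⟨⟨hax, hxb⟩, hxE⟩
    · have hxb' : x < b' := by
        rcases le_or_gt b' b with hcase | hcase
        · exact absurd (lt_of_lt_of_le hxd (max_le le_rfl hcase)) (not_lt.mpr hbx)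
        · rwa [max_eq_right hcase.le] at hxd
      exact Set.eq_empty_iff_forall_notMem.mp hgap' x ⟨⟨lt_of_lt_of_le hba hbx, hxb'⟩, hxE⟩
  rcases le_or_gt b' b with hcase | hcase
  · exact hmax' a b ha0 (Set.Ioo_subset_Ioo hlt.le hcase) (pair_ne_fst (ne_of_lt hlt)) hgap
  · exact hmax a b' ha0 (Set.Ioo_subset_Ioo le_rfl hcase.le) (pair_ne_snd (ne_of_gt hcase))
      (by rwa [max_eq_right hcase.le] at hempty)

lemma comp_right_unique {a b b' : ℝ} (h : IsCompExt E a b) (h' : IsCompExt E a b') : b = b' := by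
  rcases lt_trichotomy b b' with hlt | heq | hlt
  · exact absurd h'.2.2.1 (h.2.2.2 a b' h.1 (Set.Ioo_subset_Ioo le_rfl hlt.le)
      (pair_ne_snd (ne_of_gt hlt)))
  · exact heq
  · exact absurd h.2.2.1 (h'.2.2.2 a b h'.1 (Set.Ioo_subset_Ioo le_rfl hlt.le)
      (pair_ne_snd (ne_of_gt hlt)))

lemma comp_interior {α β a b : ℝ} (hA : IsCompExt E α β) (hC : IsCompExt E a b)
    (h1 : a ≤ α) (h2 : α < b) : α = a ∧ β = b := by
  have he : α = a := by
    rcases eq_or_lt_of_le h1 with he | hl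
    · exact he.symm
    · exact absurd (comp_lt hC hA hl) (not_le.mpr h2)
  subst he
  exact ⟨rfl, comp_right_unique hA hC⟩

lemma comp_left_E {a b : ℝ} (h : IsCompExt E a b) {c : ℝ} (hc : 0 ≤ c) (hca : c < a) :
    ∃ x ∈ E, c < x ∧ x ≤ a := by
  have hne := h.2.2.2 c b hc (Set.Ioo_subset_Ioo hca.le le_rfl) (pair_ne_fst (ne_of_lt hca))
  rw [← Set.nonempty_iff_ne_empty] at hne
  obtain ⟨x, ⟨hcx, hxb⟩, hxE⟩ := hne
  exact ⟨x, hxE, hcx, gap_notmem' h.2.2.1 hxE hxb⟩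

lemma comp_right_E {a b : ℝ} (h : IsCompExt E a b) {d : ℝ} (hd : b < d) :
    ∃ x ∈ E, b ≤ x ∧ x < d := by
  have hne := h.2.2.2 a d h.1 (Set.Ioo_subset_Ioo le_rfl hd.le) (pair_ne_snd (ne_of_gt hd))
  rw [← Set.nonempty_iff_ne_empty] at hne
  obtain ⟨x, ⟨hax, hxd⟩, hxE⟩ := hne
  exact ⟨x, hxE, gap_notmem h.2.2.1 hxE hax, hxd⟩

lemma gap_to_comp (hacc : AccZero E) {g₁ g₂ t : ℝ} (h1 : 0 < g₁) (h2 : g₁ < g₂)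
    (hgap : Set.Ioo g₁ g₂ ∩ E = ∅) (ht : t ∈ E) (htg : g₂ ≤ t) :
    ∃ a b, IsCompExt E a b ∧ 0 < a ∧ a ≤ g₁ ∧ g₂ ≤ b := by
  obtain ⟨x₀, hx₀E, hx₀0, hx₀g⟩ := hacc g₁ h1
  set S₁ := E ∩ Set.Ioc 0 g₁ with hS₁
  set S₂ := E ∩ Set.Ici g₂ with hS₂
  have hS₁ne : S₁.Nonempty := ⟨x₀, hx₀E, hx₀0, hx₀g.le⟩
  have hS₁bd : BddAbove S₁ := ⟨g₁, fun y hy => hy.2.2⟩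
  have hS₂ne : S₂.Nonempty := ⟨t, ht, htg⟩
  have hS₂bd : BddBelow S₂ := ⟨g₂, fun y hy => hy.2⟩
  set a := sSup S₁ with ha
  set b := sInf S₂ with hb
  have hax₀ : x₀ ≤ a := le_csSup hS₁bd ⟨hx₀E, hx₀0, hx₀g.le⟩
  have ha0 : 0 < a := lt_of_lt_of_le hx₀0 hax₀
  have hag : a ≤ g₁ := csSup_le hS₁ne (fun y hy => hy.2.2)
  have hgb : g₂ ≤ b := le_csInf hS₂ne (fun y hy => hy.2)
  have hab : a < b := lt_of_le_of_lt hag (lt_of_lt_of_le h2 hgb)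
  refine ⟨a, b, ⟨ha0.le, hab, ?_, ?_⟩, ha0, hag, hgb⟩
  · apply Set.eq_empty_iff_forall_notMem.mpr
    rintro x ⟨⟨hax, hxb⟩, hxE⟩
    rcases le_or_gt x g₁ with hc | hc
    · exact absurd (le_csSup hS₁bd ⟨hxE, lt_trans ha0 hax, hc⟩) (not_le.mpr hax)
    · rcases lt_or_ge x g₂ with hc2 | hc2
      · exact Set.eq_empty_iff_forall_notMem.mp hgap x ⟨⟨hc, hc2⟩, hxE⟩
      · exact absurd (csInf_le hS₂bd ⟨hxE, hc2⟩) (not_le.mpr hxb)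
  · intro c d hc hsub hne
    obtain ⟨hca, hbd⟩ := (Set.Ioo_subset_Ioo_iff hab).mp hsub
    rw [← Set.nonempty_iff_ne_empty]
    rcases eq_or_lt_of_le hca with hce | hclt
    · have hdb : b < d := by
        rcases eq_or_lt_of_le hbd with hde | hdlt
        · exact absurd (by rw [hce, hde]) hne
        · exact hdlt
      obtain ⟨y, hyS, hyd⟩ := exists_lt_of_csInf_lt hS₂ne hdb
      exact ⟨y, ⟨lt_of_le_of_lt (hce ▸ hag) (lt_of_lt_of_le h2 hyS.2), hyd⟩, hyS.1⟩
    · obtain ⟨y, hyS, hcy⟩ := exists_lt_of_lt_csSup hS₁ne hclt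
      exact ⟨y, ⟨hcy, lt_of_lt_of_le (lt_of_le_of_lt hyS.2.2 h2) (le_trans hgb hbd)⟩, hyS.1⟩

lemma lambda0_nonneg {h : ℝ} (hh : 0 ≤ h) : 0 ≤ lambda0 E h := by
  apply le_csSup
  · exact ⟨h, by rintro l ⟨a, b, h1, h2, h3, _, h5⟩; rw [h5]; linarith⟩
  · exact ⟨0, 0, le_rfl, le_rfl, hh, by simp, by ring⟩

lemma freq_gap (hpor : porosity E = 1) {s : ℝ} (hs : 0 < s) (hs1 : s < 1) :
    ∀ ε > 0, ∃ h : ℝ, 0 < h ∧ h < ε ∧ (1 - s) * h < lambda0 E h := by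
  intro ε hε
  by_contra hcon
  push_neg at hcon
  have hev : ∀ᶠ h in nhdsWithin (0:ℝ) (Set.Ioi 0), lambda0 E h / h ≤ 1 - s := by
    filter_upwards [Ioo_mem_nhdsGT_of_mem (Set.left_mem_Ico.mpr hε)] with h hh
    rw [div_le_iff₀ hh.1]
    exact hcon h hh.1 hh.2
  have hev0 : ∀ᶠ h in nhdsWithin (0:ℝ) (Set.Ioi 0), (0:ℝ) ≤ lambda0 E h / h := by
    filter_upwards [self_mem_nhdsWithin] with h hh
    exact div_nonneg (lambda0_nonneg (le_of_lt hh)) (le_of_lt hh)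
  have hcb : IsCoboundedUnder (· ≤ ·) (nhdsWithin (0:ℝ) (Set.Ioi 0))
      (fun h => lambda0 E h / h) := isCoboundedUnder_le_of_eventually_le _ hev0
  have hle : porosity E ≤ 1 - s := Filter.limsup_le_of_le hcb hev
  rw [hpor] at hle
  linarith

lemma ex_gap {h r : ℝ} (hh : 0 ≤ h) (hr0 : 0 ≤ r) (hr : r < lambda0 E h) :
    ∃ g₁ g₂ : ℝ, 0 ≤ g₁ ∧ g₁ ≤ g₂ ∧ g₂ ≤ h ∧ Set.Ioo g₁ g₂ ∩ E = ∅ ∧ r < g₂ - g₁ := by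
  have hne : {l : ℝ | ∃ a b : ℝ, 0 ≤ a ∧ a ≤ b ∧ b ≤ h ∧ Set.Ioo a b ∩ E = ∅ ∧ l = b - a}.Nonempty :=
    ⟨0, 0, 0, le_rfl, le_rfl, hh, by simp, by ring⟩
  obtain ⟨l, hl, hrl⟩ := exists_lt_of_lt_csSup hne hr
  obtain ⟨a, b, h1, h2, h3, h4, h5⟩ := hl
  exact ⟨a, b, h1, h2, h3, h4, by rw [← h5]; exact hrl⟩

lemma ex_comp (hpor : porosity E = 1) (hacc : AccZero E) {R : ℝ} (hR : 1 ≤ R) :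
    ∀ ε > 0, ∃ a b, IsCompExt E a b ∧ 0 < a ∧ a < ε ∧ R * a ≤ b := by
  intro ε hε
  obtain ⟨t, htE, ht0, htε⟩ := hacc ε hε
  have hR1 : (0:ℝ) < R + 1 := by linarith
  set s : ℝ := 1 / (R + 1) with hs_def
  have hs0 : 0 < s := by positivity
  have hs1 : s < 1 := by
    rw [hs_def, div_lt_one hR1]; linarith
  have hRs : R * s = 1 - s := by
    rw [hs_def]; field_simp; ring
  obtain ⟨h, hh0, hht, hlam⟩ := freq_gap hpor hs0 hs1 t ht0
  obtain ⟨g₁, g₂, hg0, hg12, hg2h, hgap, hglen⟩ :=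
    ex_gap hh0.le (by nlinarith : (0:ℝ) ≤ (1 - s) * h) hlam
  have hg2pos : 0 < g₂ := by nlinarith
  have hg1lt : g₁ < s * h := by nlinarith
  have hg2gt : (1 - s) * h < g₂ := by nlinarith
  have hg1pos : 0 < g₁ := by
    rcases eq_or_lt_of_le hg0 with he | hl
    · exfalso
      obtain ⟨x, hxE, hx0, hxg⟩ := hacc g₂ hg2pos
      exact Set.eq_empty_iff_forall_notMem.mp hgap x ⟨⟨by rw [← he]; exact hx0, hxg⟩, hxE⟩
    · exact hl
  have hg12' : g₁ < g₂ := by nlinarith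
  obtain ⟨a, b, hcomp, ha0, hag, hgb⟩ := gap_to_comp hacc hg1pos hg12' hgap htE
    (le_trans hg2h hht.le)
  refine ⟨a, b, hcomp, ha0, ?_, ?_⟩
  · calc a ≤ g₁ := hag
      _ < s * h := hg1lt
      _ ≤ 1 * h := by nlinarith
      _ = h := one_mul h
      _ < t := hht
      _ < ε := htε
  · apply le_of_lt
    have : R * a ≤ R * g₁ := by nlinarith
    calc R * a ≤ R * g₁ := this
      _ < R * (s * h) := by nlinarith
      _ = (1 - s) * h := by rw [← mul_assoc, hRs]
      _ < g₂ := hg2gt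
      _ ≤ b := hgb

lemma memE0d_pos (hE : E ⊆ Set.Ici 0) {τ : ℕ → ℝ} (hτ : memE0d E τ) (n : ℕ) : 0 < τ n :=
  lt_of_le_of_ne (hE (hτ.2.2 n).1) (Ne.symm (hτ.2.2 n).2)

lemma usp_to_csp (hE : E ⊆ Set.Ici 0) (h : USP E) : CSP E := by
  obtain ⟨c, hc, hA⟩ := h
  intro τ hτ
  obtain ⟨A, hmem, hle, hlim⟩ := hA τ hτ
  refine ⟨A, hmem, 1/(c+1), 1, by positivity, one_pos, ?_⟩
  have hev : ∀ᶠ n in Filter.atTop,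
      ENNReal.ofReal ((A n).1 / τ n) < ENNReal.ofReal (c+1) := by
    refine Filter.eventually_lt_of_limsup_lt ?_ (by isBoundedDefault)
    exact lt_of_le_of_lt hlim ((ENNReal.ofReal_lt_ofReal_iff (by linarith)).mpr (by linarith))
  filter_upwards [hev, hle] with n h1 h2
  have hτn := memE0d_pos hE hτ n
  constructor
  · have hx : (A n).1 / τ n < c + 1 := (ENNReal.ofReal_lt_ofReal_iff (by linarith)).mp h1
    rw [div_lt_iff₀ hτn] at hx
    rw [div_mul_eq_mul_div, div_le_iff₀ (by linarith : (0:ℝ) < c + 1)]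
    nlinarith
  · simpa using h2

lemma two_to_usp (hE : E ⊆ Set.Ici 0)
    (h : ∃ L : ℕ → ℝ × ℝ, memIEsd E L ∧ Universal E L ∧ Mq L < ⊤) : USP E := by
  obtain ⟨L, ⟨hLIE, _hsd⟩, _hU, hM⟩ := h
  obtain ⟨hlpos, hcomp, hl0, hratio⟩ := hLIE
  have hmpos : ∀ n, 0 < (L n).2 := fun n => lt_trans (hlpos n) (hcomp n).2.1
  set K : ℝ := (Mq L + 1).toReal with hK
  have hKne : Mq L + 1 ≠ ⊤ := ENNReal.add_ne_top.mpr ⟨hM.ne, ENNReal.one_ne_top⟩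
  have hevK : ∀ᶠ n in Filter.atTop, (L n).1 / (L (n + 1)).2 ≤ K := by
    have hM1 : Mq L < Mq L + 1 := ENNReal.lt_add_right hM.ne one_ne_zero
    have hev := Filter.eventually_lt_of_limsup_lt hM1 (by isBoundedDefault)
    filter_upwards [hev] with n hn
    calc (L n).1 / (L (n + 1)).2
        = (ENNReal.ofReal ((L n).1 / (L (n + 1)).2)).toReal :=
          (ENNReal.toReal_ofReal (div_nonneg (hlpos n).le (hmpos (n+1)).le)).symm
      _ ≤ K := ENNReal.toReal_mono hKne hn.le
  obtain ⟨NK, hNK⟩ := Filter.eventually_atTop.mp hevK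
  have hK0 : 0 ≤ K := ENNReal.toReal_nonneg
  refine ⟨K + 1, by linarith, ?_⟩
  intro τ hτ
  have hτpos : ∀ n, 0 < τ n := memE0d_pos hE hτ
  set T : ℕ → Set ℕ := fun n => {k | τ n ≤ (L k).1} with hT
  have hbd : ∀ n, BddAbove (T n) := by
    intro n
    obtain ⟨B, hB⟩ := Filter.eventually_atTop.mp (hl0.eventually (gt_mem_nhds (hτpos n)))
    exact ⟨B, fun k hk => by by_contra hc; push_neg at hc; exact absurd hk (not_le.mpr (hB k hc.le))⟩
  have hevne : ∀ᶠ n in Filter.atTop, τ n ≤ (L 0).1 := by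
    filter_upwards [hτ.2.1.eventually (gt_mem_nhds (hlpos 0))] with n hn using hn.le
  obtain ⟨N₁, hN₁⟩ := Filter.eventually_atTop.mp hevne
  set k : ℕ → ℕ := fun n => sSup (T n) with hk
  have hkmem : ∀ n ≥ N₁, τ n ≤ (L (k n)).1 := by
    intro n hn
    exact Nat.sSup_mem ⟨0, hN₁ n hn⟩ (hbd n)
  have hknot : ∀ n ≥ N₁, (L (k n + 1)).1 < τ n := by
    intro n hn
    by_contra hc
    push_neg at hc
    have h2 : k n + 1 ≤ k n := le_csSup (hbd n) (hc : k n + 1 ∈ T n)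
    omega
  have hkm : ∀ n ≥ N₁, (L (k n + 1)).2 ≤ τ n := by
    intro n hn
    exact gap_notmem (hcomp (k n + 1)).2.2.1 (hτ.2.2 n).1 (hknot n hn)
  have hktend : Filter.Tendsto k Filter.atTop Filter.atTop := by
    apply Filter.tendsto_atTop.mpr
    intro M
    filter_upwards [hτ.2.1.eventually (gt_mem_nhds (hlpos M))] with n hn
    exact le_csSup (hbd n) (show M ∈ T n from hn.le)
  refine ⟨fun n => L (k n), ⟨fun n => hlpos _, fun n => hcomp _, hl0.comp hktend, hratio.comp hktend⟩, ?_, ?_⟩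
  · filter_upwards [Filter.eventually_ge_atTop N₁] with n hn using hkmem n hn
  · apply Filter.limsup_le_of_le (by isBoundedDefault)
    have hkbig : ∀ᶠ n in Filter.atTop, NK ≤ k n := hktend.eventually (Filter.eventually_ge_atTop NK)
    filter_upwards [Filter.eventually_ge_atTop N₁, hkbig] with n hn hkn
    apply ENNReal.ofReal_le_ofReal
    have h1 : (L (k n)).1 / τ n ≤ (L (k n)).1 / (L (k n + 1)).2 := by
      gcongr
      · exact (hlpos _).le
      · exact hmpos _
      · exact hkm n hn
    calc (L (k n)).1 / τ n ≤ (L (k n)).1 / (L (k n + 1)).2 := h1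
      _ ≤ K := hNK _ hkn
      _ ≤ K + 1 := by linarith

lemma memIE_alpha_div_beta {A : ℕ → ℝ × ℝ} (hmem : memIE E A) :
    Filter.Tendsto (fun n => (A n).1 / (A n).2) Filter.atTop (nhds 0) := by
  obtain ⟨hpos, hcomp, _, hratio⟩ := hmem
  have hbpos : ∀ n, 0 < (A n).2 := fun n => lt_trans (hpos n) (hcomp n).2.1
  have heq : ∀ n, (A n).1 / (A n).2 = 1 - ((A n).2 - (A n).1) / (A n).2 := by
    intro n
    have h2 : (A n).2 ≠ 0 := (hbpos n).ne'
    field_simp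
    ring
  have : Filter.Tendsto (fun n => 1 - ((A n).2 - (A n).1) / (A n).2) Filter.atTop
      (nhds (1 - 1)) := Filter.Tendsto.sub tendsto_const_nhds hratio
  rw [sub_self] at this
  exact this.congr (fun n => (heq n).symm)

lemma memIE_ratio {A : ℕ → ℝ × ℝ} (hmem : memIE E A) (Q : ℝ) :
    ∀ᶠ n in Filter.atTop, Q * (A n).1 ≤ (A n).2 := by
  have hpos := hmem.1
  have hbpos : ∀ n, 0 < (A n).2 := fun n => lt_trans (hpos n) ((hmem.2.1) n).2.1
  set Q' : ℝ := max Q 1 with hQ'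
  have hQ'0 : 0 < Q' := lt_of_lt_of_le one_pos (le_max_right _ _)
  have hev := (memIE_alpha_div_beta hmem).eventually (gt_mem_nhds (by positivity : (0:ℝ) < 1/Q'))
  filter_upwards [hev] with n hn
  have h1 : (A n).1 / (A n).2 < 1 / Q' := hn
  rw [div_lt_div_iff₀ (hbpos n) hQ'0] at h1
  calc Q * (A n).1 ≤ Q' * (A n).1 := by
        have := hpos n; nlinarith [le_max_left Q 1]
    _ ≤ (A n).2 := by nlinarith

lemma csp_sandwich (hE : E ⊆ Set.Ici 0) (hcsp : CSP E) {τ : ℕ → ℝ} (hτ : memE0d E τ) :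
    ∃ (A : ℕ → ℝ × ℝ) (c₁ : ℝ), memIE E A ∧ 0 < c₁ ∧
      ∀ᶠ n in Filter.atTop, τ n ≤ (A n).1 ∧ (A n).1 ≤ τ n / c₁ := by
  obtain ⟨A, hmem, c₁, c₂, hc₁, hc₂, hev⟩ := hcsp τ hτ
  refine ⟨A, c₁, hmem, hc₁, ?_⟩
  filter_upwards [hev, memIE_ratio hmem (c₂ + 1)] with n ⟨h1, h2⟩ h3
  have hαpos := hmem.1 n
  have hτβ : τ n < (A n).2 := by nlinarith
  have hτα : τ n ≤ (A n).1 := gap_notmem' ((hmem.2.1 n).2.2.1) (hτ.2.2 n).1 hτβ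
  exact ⟨hτα, by rw [le_div_iff₀ hc₁]; nlinarith⟩

lemma ratio_escape (hE : E ⊆ Set.Ici 0) (hcsp : CSP E) :
    ∃ R : ℝ, 2 ≤ R ∧ ∀ K : ℝ, 0 < K → ∃ δ : ℝ, 0 < δ ∧
      ∀ a b : ℝ, IsCompExt E a b → 0 < a → a < δ → R * a ≤ b → K * a ≤ b := by
  by_contra hcon
  push_neg at hcon
  set Rj : ℕ → ℝ := fun j => (j:ℝ) + 2 with hRj
  have hRj2 : ∀ j, 2 ≤ Rj j := fun j => by
    simp only [hRj]
    have : (0:ℝ) ≤ (j:ℝ) := Nat.cast_nonneg j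
    linarith
  choose Kj hKj0 hKj using fun j => hcon (Rj j) (hRj2 j)
  have hstep : ∀ (j : ℕ) (ε : {x : ℝ // 0 < x}), ∃ p : ℝ × ℝ × ℝ,
      p.1 ∈ E ∧ 0 < p.1 ∧ p.1 < ε.val ∧ IsCompExt E p.2.1 p.2.2 ∧ 0 < p.2.1 ∧
      p.2.1 / 2 < p.1 ∧ p.1 ≤ p.2.1 ∧ Rj j * p.2.1 ≤ p.2.2 ∧ p.2.2 < Kj j * p.2.1 := by
    intro j ε
    obtain ⟨a, b, hcomp, ha0, haδ, hRab, hbK⟩ := hKj j ε.val ε.2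
    obtain ⟨x, hxE, hx1, hx2⟩ := comp_left_E hcomp (by positivity : (0:ℝ) ≤ a/2) (by linarith)
    exact ⟨(x, a, b), hxE, by linarith, lt_of_le_of_lt hx2 haδ, hcomp, ha0, hx1, hx2, hRab, hbK⟩
  choose F hF using hstep
  set jf : ℕ → ℕ := fun s => (Nat.unpair s).1 with hjf
  set eps : ℕ → {x : ℝ // 0 < x} := fun s => Nat.rec ⟨1, one_pos⟩
    (fun s' prev => ⟨(F (jf s') prev).1 / 2, half_pos (hF (jf s') prev).2.1⟩) s with heps
  set τ : ℕ → ℝ := fun s => (F (jf s) (eps s)).1 with hτdef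
  set av : ℕ → ℝ := fun s => (F (jf s) (eps s)).2.1 with havdef
  set bv : ℕ → ℝ := fun s => (F (jf s) (eps s)).2.2 with hbvdef
  have hspec : ∀ s, τ s ∈ E ∧ 0 < τ s ∧ τ s < (eps s).val ∧ IsCompExt E (av s) (bv s) ∧
      0 < av s ∧ av s / 2 < τ s ∧ τ s ≤ av s ∧ Rj (jf s) * av s ≤ bv s ∧
      bv s < Kj (jf s) * av s := fun s => hF (jf s) (eps s)
  have heps_succ : ∀ s, (eps (s+1)).val = τ s / 2 := fun s => rfl
  have hdec : ∀ s, τ (s+1) < τ s / 2 := fun s => (heps_succ s) ▸ (hspec (s+1)).2.2.1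
  have hτE0d : memE0d E τ := by
    refine ⟨Filter.Eventually.of_forall (fun s => ?_), ?_, fun s => ⟨(hspec s).1, fun h => (ne_of_gt (hspec s).2.1) h⟩⟩
    · have h1 := hdec s; have h2 := (hspec s).2.1; linarith
    · have hgeo : ∀ s, τ s ≤ (1/2:ℝ)^s := by
        intro s
        induction s with
        | zero =>
          have := (hspec 0).2.2.1
          have he0 : (eps 0).val = 1 := rfl
          simpa [he0] using this.le
        | succ n ih =>
          have h1 := hdec n
          have h2 : (0:ℝ) ≤ (1/2:ℝ)^n := by positivity
          rw [pow_succ]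
          nlinarith
      exact squeeze_zero (fun s => ((hspec s).2.1).le) hgeo
        (tendsto_pow_atTop_nhds_zero_of_lt_one (by norm_num) (by norm_num))
  obtain ⟨A, c₁, hmem, hc₁, hev⟩ := csp_sandwich hE hcsp hτE0d
  set j' : ℕ := ⌈1/c₁⌉₊ with hj'
  have hRjc : 1/c₁ < Rj j' := by
    refine lt_of_le_of_lt (Nat.le_ceil _) ?_
    simp only [hRj, hj']
    have : (0:ℝ) ≤ (⌈1/c₁⌉₊ : ℝ) := Nat.cast_nonneg _
    linarith
  set K' : ℝ := max (Kj j') 2 with hK'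
  have hevK := memIE_ratio hmem (K' + 1)
  obtain ⟨N, hN⟩ := Filter.eventually_atTop.mp (hev.and hevK)
  set s := Nat.pair j' N with hs
  have hsN : N ≤ s := Nat.right_le_pair j' N
  have hjs : jf s = j' := by simp [hjf, hs, Nat.unpair_pair]
  obtain ⟨⟨h1, h2⟩, h3⟩ := hN s hsN
  obtain ⟨hτE, hτ0, hτeps, hcompab, hav0, hav2, hτav, hRav, hbvK⟩ := hspec s
  rw [hjs] at hRav hbvK
  have hαpos : 0 < (A s).1 := hmem.1 s
  have hαb : (A s).1 < bv s := by
    have hd1 : τ s / c₁ ≤ av s / c₁ := by gcongr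
    have hd2 : av s / c₁ < Rj j' * av s := by
      have he : av s / c₁ = (1/c₁) * av s := by ring
      rw [he]
      exact mul_lt_mul_of_pos_right hRjc hav0
    exact lt_of_le_of_lt (le_trans h2 hd1) (lt_of_lt_of_le hd2 hRav)
  have hcase : (A s).1 ≤ av s := by
    by_contra hgt
    push_neg at hgt
    have := (comp_interior (hmem.2.1 s) hcompab hgt.le hαb).1
    linarith
  rcases eq_or_lt_of_le hcase with heq | hlt
  · rw [← heq] at hcompab hbvK
    have hbeq : (A s).2 = bv s := comp_right_unique (hmem.2.1 s) hcompab
    rw [hbeq] at h3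
    have hKle : Kj j' ≤ K' := le_max_left _ _
    nlinarith
  · have hβav : (A s).2 ≤ av s := comp_lt (hmem.2.1 s) hcompab hlt
    have hK2 : (2:ℝ) ≤ K' := le_max_right _ _
    nlinarith

lemma lambda_max {S : Set ℝ} (hS : S.Nonempty) (hbd : BddAbove S) (hpos : ∀ x ∈ S, 0 < x)
    (hsep : ∀ x ∈ S, ∀ y ∈ S, x < y → 2*x ≤ y) : ∃ m ∈ S, ∀ z ∈ S, z ≤ m := by
  obtain ⟨x₀, hx₀⟩ := hS
  have hs0 : 0 < sSup S := lt_of_lt_of_le (hpos x₀ hx₀) (le_csSup hbd hx₀)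
  obtain ⟨y, hy, hys⟩ := exists_lt_of_lt_csSup ⟨x₀, hx₀⟩
    (show (2/3)*sSup S < sSup S by linarith)
  refine ⟨y, hy, fun z hz => ?_⟩
  by_contra hzy
  push_neg at hzy
  have h2 := hsep y hy z hz hzy
  have hzs := le_csSup hbd hz
  have hy0 := hpos y hy
  linarith

set_option maxHeartbeats 2000000 in
lemma csp_to_two (hE : E ⊆ Set.Ici 0) (hpor : porosity E = 1) (hacc : AccZero E)
    (hcsp : CSP E) : ∃ L : ℕ → ℝ × ℝ, memIEsd E L ∧ Universal E L ∧ Mq L < ⊤ := by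
  classical
  obtain ⟨R, hR2, hSR⟩ := ratio_escape hE hcsp
  have hR1 : (1:ℝ) ≤ R := le_trans one_le_two hR2
  set Λ : Set ℝ := {x | 0 < x ∧ x < 1 ∧ ∃ b, IsCompExt E x b ∧ R * x ≤ b} with hΛ
  have haccΛ : ∀ ε : ℝ, 0 < ε → ∃ x ∈ Λ, x < ε := by
    intro ε hε
    obtain ⟨a, b, hc, ha0, haε, hab⟩ := ex_comp hpor hacc hR1 (min ε 1) (by positivity)
    exact ⟨a, ⟨ha0, lt_of_lt_of_le haε (min_le_right _ _), b, hc, hab⟩,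
      lt_of_lt_of_le haε (min_le_left _ _)⟩
  have hΛpos : ∀ x ∈ Λ, 0 < x := fun x hx => hx.1
  have hsep : ∀ x ∈ Λ, ∀ y ∈ Λ, x < y → 2*x ≤ y := by
    intro x hx y hy hxy
    obtain ⟨hx0, hx1, bx, hbx, hRx⟩ := hx
    obtain ⟨hy0, hy1, by', hby, hRy⟩ := hy
    have hbxy : bx ≤ y := comp_lt hbx hby hxy
    nlinarith
  have hbdd : BddAbove Λ := ⟨1, fun x hx => hx.2.1.le⟩
  have hstep : ∀ x : {x : ℝ // x ∈ Λ}, ∃ y : {y : ℝ // y ∈ Λ},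
      y.val < x.val ∧ ∀ z ∈ Λ, z < x.val → z ≤ y.val := by
    intro x
    have hne : (Λ ∩ Set.Iio x.val).Nonempty := by
      obtain ⟨z, hz, hzx⟩ := haccΛ x.val (hΛpos _ x.2)
      exact ⟨z, hz, hzx⟩
    obtain ⟨m, hm, hmax⟩ := lambda_max hne ⟨x.val, fun z hz => hz.2.le⟩
      (fun z hz => hΛpos z hz.1) (fun a ha b hb hab => hsep a ha.1 b hb.1 hab)
    exact ⟨⟨m, hm.1⟩, hm.2, fun z hz hzx => hmax z ⟨hz, hzx⟩⟩
  choose G hG1 hG2 using hstep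
  have hΛne : Λ.Nonempty := by
    obtain ⟨x, hx, _⟩ := haccΛ 1 one_pos
    exact ⟨x, hx⟩
  obtain ⟨y₀v, hy₀Λ, hy₀max⟩ := lambda_max hΛne hbdd hΛpos hsep
  set ℓ' : ℕ → {x : ℝ // x ∈ Λ} := fun n => G^[n] ⟨y₀v, hy₀Λ⟩ with hℓ'
  set l : ℕ → ℝ := fun n => (ℓ' n).val with hldef
  have hmem : ∀ n, l n ∈ Λ := fun n => (ℓ' n).2
  have hsucc : ∀ n, ℓ' (n+1) = G (ℓ' n) := fun n => Function.iterate_succ_apply' G n _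
  have hdec : ∀ n, l (n+1) < l n := by
    intro n
    have := hG1 (ℓ' n)
    rw [hldef]
    simp only [hsucc n]
    exact this
  have hmaxmid : ∀ n, ∀ z ∈ Λ, z < l n → z ≤ l (n+1) := by
    intro n z hz hzl
    have := hG2 (ℓ' n) z hz hzl
    simp only [hldef, hsucc n]
    exact this
  have hanti : StrictAnti l := strictAnti_nat_of_succ_lt hdec
  have hl0 : Filter.Tendsto l Filter.atTop (nhds 0) := by
    have hgeo : ∀ n, l n ≤ (1/2:ℝ)^n * l 0 := by
      intro n
      induction n with
      | zero => simp
      | succ n ih =>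
        have h1 := hsep (l (n+1)) (hmem (n+1)) (l n) (hmem n) (hdec n)
        have h2 : (0:ℝ) ≤ (1/2:ℝ)^n := by positivity
        rw [pow_succ]
        nlinarith
    apply squeeze_zero (fun n => (hΛpos _ (hmem n)).le) hgeo
    have := (tendsto_pow_atTop_nhds_zero_of_lt_one (by norm_num : (0:ℝ) ≤ 1/2)
      (by norm_num)).mul_const (l 0)
    simpa using this
  have hsurj : ∀ x ∈ Λ, ∃ n, l n = x := by
    intro x hx
    by_contra hne
    push_neg at hne
    have hgt : ∀ n, x < l n := by
      intro n
      induction n with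
      | zero => exact lt_of_le_of_ne (hy₀max x hx) (fun h => hne 0 (h.symm))
      | succ n ih => exact lt_of_le_of_ne (hmaxmid n x hx ih) (fun h => hne (n+1) (h.symm))
    obtain ⟨n, hn⟩ := (hl0.eventually (gt_mem_nhds (hΛpos x hx))).exists
    exact absurd (hgt n) (not_lt.mpr hn.le)
  have hmex : ∀ n, ∃ b, IsCompExt E (l n) b ∧ R * l n ≤ b := fun n => (hmem n).2.2
  choose mfun hm1 hm2 using hmex
  have hml : ∀ n, l n < mfun n := fun n => (hm1 n).2.1
  have hmpos : ∀ n, 0 < mfun n := fun n => lt_trans (hΛpos _ (hmem n)) (hml n)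
  have hdiv0 : Filter.Tendsto (fun n => l n / mfun n) Filter.atTop (nhds 0) := by
    rw [tendsto_order]
    constructor
    · intro c hc
      apply Filter.Eventually.of_forall
      intro n
      exact lt_of_lt_of_le hc (div_nonneg (hΛpos _ (hmem n)).le (hmpos n).le)
    · intro c hc
      set K : ℝ := max (2/c) 1 with hKdef
      have hK0 : 0 < K := lt_of_lt_of_le one_pos (le_max_right _ _)
      obtain ⟨δ, hδ0, hδ⟩ := hSR K hK0
      filter_upwards [hl0.eventually (gt_mem_nhds hδ0)] with n hn
      have hKl : K * l n ≤ mfun n := hδ (l n) (mfun n) (hm1 n) (hΛpos _ (hmem n)) hn (hm2 n)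
      have hln := hΛpos _ (hmem n)
      have h1 : l n / mfun n ≤ 1/K := by
        rw [div_le_div_iff₀ (hmpos n) hK0]
        nlinarith
      have h2 : 1/K < c := by
        have h3 : 2/c ≤ K := le_max_left _ _
        have h4 : c * (2/c) = 2 := by field_simp
        rw [div_lt_iff₀ hK0]
        nlinarith
      linarith
  have hratio : Filter.Tendsto (fun n => (mfun n - l n) / mfun n) Filter.atTop (nhds 1) := by
    have h1 : Filter.Tendsto (fun n => 1 - l n / mfun n) Filter.atTop (nhds (1 - 0)) :=
      Filter.Tendsto.sub tendsto_const_nhds hdiv0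
    rw [sub_zero] at h1
    apply h1.congr
    intro n
    have h2 : mfun n ≠ 0 := (hmpos n).ne'
    field_simp
  set L : ℕ → ℝ × ℝ := fun n => (l n, mfun n) with hLdef
  have hLIE : memIE E L := ⟨fun n => hΛpos _ (hmem n), hm1, hl0, hratio⟩
  refine ⟨L, ⟨hLIE, Filter.Eventually.of_forall hdec⟩, ?_, ?_⟩
  · -- Universal
    intro A hA
    obtain ⟨hAIE, _hAdec⟩ := hA
    have hev1 : ∀ᶠ n in Filter.atTop, (A n).1 ∈ Λ := by
      filter_upwards [memIE_ratio hAIE R, hAIE.2.2.1.eventually (gt_mem_nhds one_pos)]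
        with n hn1 hn2
      exact ⟨hAIE.1 n, hn2, (A n).2, hAIE.2.1 n, hn1⟩
    obtain ⟨N₁, hN₁⟩ := Filter.eventually_atTop.mp hev1
    refine ⟨N₁, fun n => if h : (A n).1 ∈ Λ then (hsurj _ h).choose else 0, fun n hn => ?_⟩
    have h := hN₁ n hn
    simp only [dif_pos h]
    exact ((hsurj _ h).choose_spec).symm
  · -- Mq L < ⊤
    by_contra hM
    have hMtop : Mq L = ⊤ := by
      rwa [lt_top_iff_ne_top, not_ne_iff] at hM
    have hfreq : ∀ K : ℝ, ∃ᶠ n in Filter.atTop, K < l n / mfun (n+1) := by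
      intro K
      by_contra hcon2
      rw [Filter.not_frequently] at hcon2
      have hle : Mq L ≤ ENNReal.ofReal K := by
        apply Filter.limsup_le_of_le (by isBoundedDefault)
        filter_upwards [hcon2] with n hn
        exact ENNReal.ofReal_le_ofReal (not_lt.mp hn)
      rw [hMtop] at hle
      exact absurd (lt_of_le_of_lt hle ENNReal.ofReal_lt_top) (lt_irrefl ⊤)
    have hm_le : ∀ n, mfun (n+1) ≤ l n := fun n => comp_lt (hm1 (n+1)) (hm1 n) (hdec n)
    have hstep2 : ∀ (N : ℕ) (K : ℝ) (ε : {x : ℝ // 0 < x}), ∃ p : ℕ × ℝ,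
        N ≤ p.1 ∧ K < l p.1 / mfun (p.1+1) ∧ p.2 ∈ E ∧ 0 < p.2 ∧
        mfun (p.1+1) ≤ p.2 ∧ p.2 < 2 * mfun (p.1+1) ∧ p.2 < ε.val := by
      intro N K ε
      have hev2 : ∀ᶠ n in Filter.atTop, l n < ε.val/2 :=
        hl0.eventually (gt_mem_nhds (half_pos ε.2))
      obtain ⟨n, hn1, hn2, hn3⟩ := ((hfreq K).and_eventually
        (hev2.and (Filter.eventually_ge_atTop N))).exists
      obtain ⟨x, hxE, hx1, hx2⟩ := comp_right_E (hm1 (n+1))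
        (show mfun (n+1) < 2 * mfun (n+1) by linarith [hmpos (n+1)])
      refine ⟨(n, x), hn3, hn1, hxE, lt_of_lt_of_le (hmpos (n+1)) hx1, hx1, hx2, ?_⟩
      calc x < 2 * mfun (n+1) := hx2
        _ ≤ 2 * l n := by linarith [hm_le n]
        _ < ε.val := by linarith [hn2]
    choose SF hSF using hstep2
    set u : ℕ → ℕ × {x : ℝ // 0 < x} := fun k => Nat.rec
      ((SF 0 0 ⟨1, one_pos⟩).1, ⟨(SF 0 0 ⟨1, one_pos⟩).2, (hSF 0 0 ⟨1, one_pos⟩).2.2.2.1⟩)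
      (fun k prev =>
        ((SF (prev.1+1) ((k:ℝ)+1) ⟨prev.2.val/2, half_pos prev.2.2⟩).1,
         ⟨(SF (prev.1+1) ((k:ℝ)+1) ⟨prev.2.val/2, half_pos prev.2.2⟩).2,
          (hSF (prev.1+1) ((k:ℝ)+1) ⟨prev.2.val/2, half_pos prev.2.2⟩).2.2.2.1⟩)) k
      with hu
    set nk : ℕ → ℕ := fun k => (u k).1 with hnk
    set τ2 : ℕ → ℝ := fun k => (u k).2.val with hτ2
    have huspec : ∀ k : ℕ, ((k:ℝ) - 1) < l (nk k) / mfun (nk k + 1) ∧ τ2 k ∈ E ∧ 0 < τ2 k ∧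
        mfun (nk k + 1) ≤ τ2 k ∧ τ2 k < 2 * mfun (nk k + 1) ∧
        (k = 0 → τ2 k < 1) ∧ (∀ k' : ℕ, k = k' + 1 → τ2 k < τ2 k' / 2) := by
      intro k
      cases k with
      | zero =>
        have h := hSF 0 0 ⟨1, one_pos⟩
        have h1 : (0:ℝ) < l (nk 0) / mfun (nk 0 + 1) := h.2.1
        have h2 : τ2 0 ∈ E := h.2.2.1
        have h3 : 0 < τ2 0 := h.2.2.2.1
        have h4 : mfun (nk 0 + 1) ≤ τ2 0 := h.2.2.2.2.1
        have h5 : τ2 0 < 2 * mfun (nk 0 + 1) := h.2.2.2.2.2.1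
        have h6 : τ2 0 < 1 := h.2.2.2.2.2.2
        exact ⟨by push_cast; linarith, h2, h3, h4, h5, fun _ => h6,
          fun k' hk' => absurd hk' (by omega)⟩
      | succ k =>
        have h := hSF ((u k).1+1) ((k:ℝ)+1) ⟨(u k).2.val/2, half_pos (u k).2.2⟩
        have h1 : ((k:ℝ)+1) < l (nk (k+1)) / mfun (nk (k+1) + 1) := h.2.1
        have h2 : τ2 (k+1) ∈ E := h.2.2.1
        have h3 : 0 < τ2 (k+1) := h.2.2.2.1
        have h4 : mfun (nk (k+1) + 1) ≤ τ2 (k+1) := h.2.2.2.2.1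
        have h5 : τ2 (k+1) < 2 * mfun (nk (k+1) + 1) := h.2.2.2.2.2.1
        have h6 : τ2 (k+1) < τ2 k / 2 := h.2.2.2.2.2.2
        refine ⟨by push_cast; linarith, h2, h3, h4, h5,
          fun hh => absurd hh (by omega), fun k' hk' => ?_⟩
        have hke : k' = k := by omega
        subst hke
        exact h6
    have hτdec : ∀ k, τ2 (k+1) < τ2 k / 2 := fun k => (huspec (k+1)).2.2.2.2.2.2 k rfl
    have hτpos : ∀ k, 0 < τ2 k := fun k => (huspec k).2.2.1
    have hτ2E0d : memE0d E τ2 := by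
      refine ⟨Filter.Eventually.of_forall (fun k => ?_), ?_, fun k =>
        ⟨(huspec k).2.1, fun h => (ne_of_gt (hτpos k)) h⟩⟩
      · have h1 := hτdec k; have h2 := hτpos k; linarith
      · have hgeo : ∀ k, τ2 k ≤ (1/2:ℝ)^k * τ2 0 := by
          intro k
          induction k with
          | zero => simp
          | succ n ih =>
            have h1 := hτdec n
            have h2 : (0:ℝ) ≤ (1/2:ℝ)^n := by positivity
            rw [pow_succ]
            nlinarith
        apply squeeze_zero (fun k => (hτpos k).le) hgeo
        have := (tendsto_pow_atTop_nhds_zero_of_lt_one (by norm_num : (0:ℝ) ≤ 1/2)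
          (by norm_num)).mul_const (τ2 0)
        simpa using this
    obtain ⟨A, c₁, hAmem, hc₁, hAev⟩ := csp_sandwich hE hcsp hτ2E0d
    have hevΛ : ∀ᶠ n in Filter.atTop, (A n).1 ∈ Λ := by
      filter_upwards [memIE_ratio hAmem R, hAmem.2.2.1.eventually (gt_mem_nhds one_pos)]
        with n hn1 hn2
      exact ⟨hAmem.1 n, hn2, (A n).2, hAmem.2.1 n, hn1⟩
    obtain ⟨N₂, hN₂⟩ := Filter.eventually_atTop.mp (hAev.and hevΛ)
    set k : ℕ := max N₂ (⌈2/c₁⌉₊ + 1) with hkdef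
    have hkN₂ : N₂ ≤ k + 1 := le_trans (le_max_left _ _) (Nat.le_succ k)
    have hkc : 2/c₁ ≤ (k:ℝ) := by
      have h1 : (⌈2/c₁⌉₊ : ℝ) ≤ k := by
        exact_mod_cast Nat.cast_le.mpr (le_trans (Nat.le_succ _) (le_max_right N₂ (⌈2/c₁⌉₊ + 1)))
      have h2 := Nat.le_ceil (2/c₁)
      linarith
    clear_value u nk τ2 k
    obtain ⟨⟨hA1, hA2⟩, hA3⟩ := hN₂ (k+1) hkN₂
    -- hA1 : τ2 (k+1) ≤ (A (k+1)).1, hA2 : (A (k+1)).1 ≤ τ2 (k+1) / c₁, hA3 : mem Λ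
    obtain ⟨j, hj⟩ := hsurj _ hA3
    obtain ⟨hv, _, _, hmτ, hτ2m, _, _⟩ := huspec (k+1)
    -- l j = (A (k+1)).1 ≥ τ2 (k+1) ≥ mfun (nk (k+1) + 1) > l (nk (k+1) + 1)
    have hlj : l (nk (k+1) + 1) < l j := by
      rw [hj]
      exact lt_of_lt_of_le (lt_of_lt_of_le (hml _) hmτ) hA1
    have hjle : j ≤ nk (k+1) := by
      have := hanti.lt_iff_gt.mp hlj
      omega
    have hlnk : l (nk (k+1)) ≤ (A (k+1)).1 := by
      rw [← hj]
      exact hanti.antitone hjle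
    -- contradiction with hv : (k+1)-1 < l (nk (k+1)) / mfun (nk (k+1) + 1)
    have hm0 := hmpos (nk (k+1) + 1)
    have hvv : ((k:ℝ)) < l (nk (k+1)) / mfun (nk (k+1) + 1) := by
      push_cast at hv
      linarith
    have hfinal : l (nk (k+1)) < (2/c₁) * mfun (nk (k+1) + 1) := by
      have h5 : c₁ * (A (k+1)).1 ≤ τ2 (k+1) := by
        rw [le_div_iff₀ hc₁] at hA2; nlinarith
      have h6 : c₁ * l (nk (k+1)) ≤ τ2 (k+1) := by nlinarith
      have h7 : τ2 (k+1) < 2 * mfun (nk (k+1) + 1) := hτ2m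
      rw [div_mul_eq_mul_div, lt_div_iff₀ hc₁]
      nlinarith
    rw [lt_div_iff₀ hm0] at hvv
    have h8 : (2/c₁) * mfun (nk (k+1) + 1) ≤ ((k:ℝ)) * mfun (nk (k+1) + 1) := by
      nlinarith [hm0, hkc]
    linarith

end CSPProofs

theorem stmt11 (E : Set ℝ) (hE : E ⊆ Set.Ici 0) (hpor : porosity E = 1)
    (hacc : AccZero E) :
    (CSP E ↔ ∃ L : ℕ → ℝ × ℝ, memIEsd E L ∧ Universal E L ∧ Mq L < ⊤) ∧
    (CSP E ↔ USP E) := by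
  constructor
  · exact ⟨fun h => csp_to_two hE hpor hacc h,
      fun h => usp_to_csp hE (two_to_usp hE h)⟩
  · exact ⟨fun h => two_to_usp hE (csp_to_two hE hpor hacc h),
      fun h => usp_to_csp hE h⟩
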